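/- Suppose the smooth functions α̃⁽⁺²⁾, α̃⁽⁻²⁾, F⁽⁺²⁾, F⁽⁻²⁾ on Ω satisfy the inhomogeneous Teukolsky equations 𝔗⁽±²⁾α̃⁽±²⁾ = F⁽±²⁾. Define ψ⁽⁺²⁾ = w⁻¹L̲α̃⁽⁺²⁾, Ψ⁽⁺²⁾ = w⁻¹L̲ψ⁽⁺²⁾, ψ⁽⁻²⁾ = w⁻¹Lα̃⁽⁻²⁾, Ψ⁽⁻²⁾ = w⁻¹Lψ⁽⁻²⁾. Then on Ω: 𝕽⁽⁺²⁾ψ⁽⁺²⁾ = L̲(w⁻¹F⁽⁺²⁾) − w′Ψ⁽⁺²⁾ + 6M w α̃⁽⁺²⁾ and 𝕽⁽⁻²⁾ψ⁽⁻²⁾ = L(w⁻¹F⁽⁻²⁾) + w′Ψ⁽⁻²⁾ − 6M w α̃⁽⁻²⁾. -/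

import Mathlib

/- Schwarzschild-Anti-de Sitter background: basic operators on functions
   u(t, r, ϑ, φ) with values in ℂ. -/

noncomputable section

open Filter Topology Set

namespace Grav

abbrev F4 : Type := ℝ → ℝ → ℝ → ℝ → ℂ

/-- `Δ(r) = r² + k²r⁴ − 2Mr`. -/
def Del (M k r : ℝ) : ℝ := r ^ 2 + k ^ 2 * r ^ 4 - 2 * M * r

/-- `∂ₜ`. -/
def dT (u : F4) : F4 := fun t r ϑ φ => deriv (fun s => u s r ϑ φ) t
/-- `∂ᵣ`. -/
def dR (u : F4) : F4 := fun t r ϑ φ => deriv (fun s => u t s ϑ φ) r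
/-- `∂_ϑ`. -/
def dTh (u : F4) : F4 := fun t r ϑ φ => deriv (fun s => u t r s φ) ϑ
/-- `∂_φ`. -/
def dPh (u : F4) : F4 := fun t r ϑ φ => deriv (fun s => u t r ϑ s) φ

/-- `L u = ∂ₜ u + (Δ/r²) ∂ᵣ u`. -/
def opL (M k : ℝ) (u : F4) : F4 := fun t r ϑ φ =>
  dT u t r ϑ φ + ((Del M k r / r ^ 2 : ℝ) : ℂ) * dR u t r ϑ φ

/-- `L̲ u = ∂ₜ u − (Δ/r²) ∂ᵣ u`. -/
def opLb (M k : ℝ) (u : F4) : F4 := fun t r ϑ φ =>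
  dT u t r ϑ φ - ((Del M k r / r ^ 2 : ℝ) : ℂ) * dR u t r ϑ φ

/-- `w = Δ/r⁴`. -/
def ww (M k r : ℝ) : ℝ := Del M k r / r ^ 4
/-- `w′ = w·(6M − 2r)/r²`. -/
def wwP (M k r : ℝ) : ℝ := ww M k r * (6 * M - 2 * r) / r ^ 2

/-- The angular operator `𝓛⁽⁺²⁾`. -/
def angP (u : F4) : F4 := fun t r ϑ φ =>
  -(Real.sin ϑ : ℂ)⁻¹ * deriv (fun x => (Real.sin x : ℂ) * dTh u t r x φ) ϑ
  - (((Real.sin ϑ) ^ 2 : ℝ) : ℂ)⁻¹ * dPh (dPh u) t r ϑ φ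
  - 4 * Complex.I * ((Real.cos ϑ / (Real.sin ϑ) ^ 2 : ℝ) : ℂ) * dPh u t r ϑ φ
  + 4 * (((Real.cos ϑ / Real.sin ϑ) ^ 2 : ℝ) : ℂ) * u t r ϑ φ
  + 4 * u t r ϑ φ

/-- The angular operator `𝓛⁽⁻²⁾`. -/
def angM (u : F4) : F4 := fun t r ϑ φ =>
  -(Real.sin ϑ : ℂ)⁻¹ * deriv (fun x => (Real.sin x : ℂ) * dTh u t r x φ) ϑ
  - (((Real.sin ϑ) ^ 2 : ℝ) : ℂ)⁻¹ * dPh (dPh u) t r ϑ φ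
  + 4 * Complex.I * ((Real.cos ϑ / (Real.sin ϑ) ^ 2 : ℝ) : ℂ) * dPh u t r ϑ φ
  + 4 * (((Real.cos ϑ / Real.sin ϑ) ^ 2 : ℝ) : ℂ) * u t r ϑ φ
  + 4 * u t r ϑ φ

/-- The Teukolsky operator `𝔗⁽⁺²⁾u = −LL̲u + 2(w′/w)L̲u − w(𝓛⁽⁺²⁾ − 2 + 6M/r)u`. -/
def Tp (M k : ℝ) (u : F4) : F4 := fun t r ϑ φ =>
  - opL M k (opLb M k u) t r ϑ φ
  + 2 * ((wwP M k r / ww M k r : ℝ) : ℂ) * opLb M k u t r ϑ φ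
  - ((ww M k r : ℝ) : ℂ) *
      (angP u t r ϑ φ - 2 * u t r ϑ φ + ((6 * M / r : ℝ) : ℂ) * u t r ϑ φ)

/-- The Teukolsky operator `𝔗⁽⁻²⁾u = −LL̲u − 2(w′/w)Lu − w(𝓛⁽⁻²⁾ − 2 + 6M/r)u`. -/
def Tm (M k : ℝ) (u : F4) : F4 := fun t r ϑ φ =>
  - opL M k (opLb M k u) t r ϑ φ
  - 2 * ((wwP M k r / ww M k r : ℝ) : ℂ) * opL M k u t r ϑ φ
  - ((ww M k r : ℝ) : ℂ) *
      (angM u t r ϑ φ - 2 * u t r ϑ φ + ((6 * M / r : ℝ) : ℂ) * u t r ϑ φ)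

/-- The Regge–Wheeler operator `𝕽⁽⁺²⁾u = −LL̲u − w(𝓛⁽⁺²⁾ − 6M/r)u`. -/
def RWp (M k : ℝ) (u : F4) : F4 := fun t r ϑ φ =>
  - opL M k (opLb M k u) t r ϑ φ
  - ((ww M k r : ℝ) : ℂ) * (angP u t r ϑ φ - ((6 * M / r : ℝ) : ℂ) * u t r ϑ φ)

/-- The Regge–Wheeler operator `𝕽⁽⁻²⁾u = −LL̲u − w(𝓛⁽⁻²⁾ − 6M/r)u`. -/
def RWm (M k : ℝ) (u : F4) : F4 := fun t r ϑ φ =>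
  - opL M k (opLb M k u) t r ϑ φ
  - ((ww M k r : ℝ) : ℂ) * (angM u t r ϑ φ - ((6 * M / r : ℝ) : ℂ) * u t r ϑ φ)

/-- The exterior region `Ω = {r > r₊, 0 < ϑ < π}` (as a subset of ℝ⁴). -/
def OmSet (rp : ℝ) : Set (ℝ × ℝ × ℝ × ℝ) :=
  {p | rp < p.2.1 ∧ 0 < p.2.2.1 ∧ p.2.2.1 < Real.pi}

/-- `u` is smooth on `Ω`. -/
def SmoothOnOm (rp : ℝ) (u : F4) : Prop :=
  ContDiffOn ℝ (⊤ : ℕ∞)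
    (fun p : ℝ × ℝ × ℝ × ℝ => u p.1 p.2.1 p.2.2.1 p.2.2.2) (OmSet rp)

/-- Multiplication by `w⁻¹`. -/
def winv (M k : ℝ) (u : F4) : F4 := fun t r ϑ φ => ((ww M k r : ℝ) : ℂ)⁻¹ * u t r ϑ φ
/-- Multiplication by `w`. -/
def wmul (M k : ℝ) (u : F4) : F4 := fun t r ϑ φ => ((ww M k r : ℝ) : ℂ) * u t r ϑ φ
/-- Pointwise complex conjugation. -/
def conjF (u : F4) : F4 := fun t r ϑ φ => (starRingEnd ℂ) (u t r ϑ φ)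

/-- `𝓛⁽⁺²⁾(𝓛⁽⁺²⁾ − 2)`. -/
def angSqP (u : F4) : F4 := angP (fun t r ϑ φ => angP u t r ϑ φ - 2 * u t r ϑ φ)
/-- `𝓛⁽⁻²⁾(𝓛⁽⁻²⁾ − 2)`. -/
def angSqM (u : F4) : F4 := angM (fun t r ϑ φ => angM u t r ϑ φ - 2 * u t r ϑ φ)

/-- `𝓛⁽⁺²⁾(𝓛⁽⁺²⁾ − 2) + 12M∂ₜ`. -/
def TSp (M : ℝ) (u : F4) : F4 := fun t r ϑ φ =>
  angSqP u t r ϑ φ + 12 * (M : ℂ) * dT u t r ϑ φ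
/-- `𝓛⁽⁻²⁾(𝓛⁽⁻²⁾ − 2) − 12M∂ₜ`. -/
def TSm (M : ℝ) (u : F4) : F4 := fun t r ϑ φ =>
  angSqM u t r ϑ φ - 12 * (M : ℂ) * dT u t r ϑ φ

section Infra

variable {rp : ℝ}

abbrev E4 : Type := ℝ × ℝ × ℝ × ℝ

/-- Uncurried version of a function of four variables. -/
def Pf (u : F4) : E4 → ℂ := fun p => u p.1 p.2.1 p.2.2.1 p.2.2.2

lemma one_le_inf : (1 : WithTop ℕ∞) ≤ ((⊤ : ℕ∞) : WithTop ℕ∞) := by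
  exact_mod_cast (le_top : (1 : ℕ∞) ≤ ⊤)
lemma two_le_inf : (2 : WithTop ℕ∞) ≤ ((⊤ : ℕ∞) : WithTop ℕ∞) := by
  have : ((2 : ℕ∞) : WithTop ℕ∞) ≤ ((⊤ : ℕ∞) : WithTop ℕ∞) := by
    exact_mod_cast (le_top : (2 : ℕ∞) ≤ ⊤)
  simpa using this
lemma inf_add_one_le : ((⊤ : ℕ∞) : WithTop ℕ∞) + 1 ≤ ((⊤ : ℕ∞) : WithTop ℕ∞) := by
  exact_mod_cast (le_of_eq (top_add 1) : (⊤ : ℕ∞) + 1 ≤ ⊤)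

lemma isOpen_OmSet : IsOpen (OmSet rp) := by
  have h1 : IsOpen {p : E4 | rp < p.2.1} :=
    isOpen_lt continuous_const (continuous_fst.comp continuous_snd)
  have h2 : IsOpen {p : E4 | 0 < p.2.2.1} :=
    isOpen_lt continuous_const ((continuous_fst.comp continuous_snd).comp continuous_snd)
  have h3 : IsOpen {p : E4 | p.2.2.1 < Real.pi} :=
    isOpen_lt ((continuous_fst.comp continuous_snd).comp continuous_snd) continuous_const
  have : OmSet rp = {p : E4 | rp < p.2.1} ∩ ({p : E4 | 0 < p.2.2.1} ∩ {p : E4 | p.2.2.1 < Real.pi}) := rfl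
  rw [this]; exact h1.inter (h2.inter h3)

lemma om_nhds {p : E4} (hp : p ∈ OmSet rp) : OmSet rp ∈ 𝓝 p :=
  isOpen_OmSet.mem_nhds hp

lemma smooth_iff {u : F4} :
    SmoothOnOm rp u ↔ ∀ p ∈ OmSet rp, ContDiffAt ℝ (⊤ : ℕ∞) (Pf u) p := by
  constructor
  · intro h p hp
    exact h.contDiffAt (om_nhds hp)
  · intro h
    intro p hp
    exact (h p hp).contDiffWithinAt

lemma contDiffAt_Pf {u : F4} (hu : SmoothOnOm rp u) {p : E4} (hp : p ∈ OmSet rp) :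
    ContDiffAt ℝ (⊤ : ℕ∞) (Pf u) p := smooth_iff.1 hu p hp

/-- membership is stable in the t direction (for all t). -/
lemma memT {t r ϑ φ : ℝ} (hp : ((t, r, ϑ, φ) : E4) ∈ OmSet rp) (s : ℝ) :
    ((s, r, ϑ, φ) : E4) ∈ OmSet rp := hp

/-- membership is stable in the φ direction (for all φ). -/
lemma memPh {t r ϑ φ : ℝ} (hp : ((t, r, ϑ, φ) : E4) ∈ OmSet rp) (s : ℝ) :
    ((t, r, ϑ, s) : E4) ∈ OmSet rp := hp

lemma memR {t r ϑ φ : ℝ} (hp : ((t, r, ϑ, φ) : E4) ∈ OmSet rp) :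
    ∀ᶠ s in 𝓝 r, ((t, s, ϑ, φ) : E4) ∈ OmSet rp := by
  have : ∀ᶠ s in 𝓝 r, rp < s := eventually_gt_nhds hp.1
  filter_upwards [this] with s hs
  exact ⟨hs, hp.2⟩

lemma memTh {t r ϑ φ : ℝ} (hp : ((t, r, ϑ, φ) : E4) ∈ OmSet rp) :
    ∀ᶠ s in 𝓝 ϑ, ((t, r, s, φ) : E4) ∈ OmSet rp := by
  have h1 : ∀ᶠ s in 𝓝 ϑ, 0 < s := eventually_gt_nhds hp.2.1
  have h2 : ∀ᶠ s in 𝓝 ϑ, s < Real.pi := eventually_lt_nhds hp.2.2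
  filter_upwards [h1, h2] with s hs1 hs2
  exact ⟨hp.1, hs1, hs2⟩

def eT : E4 := (1, 0, 0, 0)
def eR : E4 := (0, 1, 0, 0)
def eTh : E4 := (0, 0, 1, 0)
def ePh : E4 := (0, 0, 0, 1)

lemma hasDerivAt_lineT (r ϑ φ s : ℝ) :
    HasDerivAt (fun x : ℝ => ((x, r, ϑ, φ) : E4)) eT s :=
  HasDerivAt.prodMk (hasDerivAt_id s) ((HasDerivAt.prodMk (hasDerivAt_const s r)
    (HasDerivAt.prodMk (hasDerivAt_const s ϑ) (hasDerivAt_const s φ))))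

lemma hasDerivAt_lineR (t ϑ φ s : ℝ) :
    HasDerivAt (fun x : ℝ => ((t, x, ϑ, φ) : E4)) eR s :=
  HasDerivAt.prodMk (hasDerivAt_const s t) ((HasDerivAt.prodMk (hasDerivAt_id s)
    (HasDerivAt.prodMk (hasDerivAt_const s ϑ) (hasDerivAt_const s φ))))

lemma hasDerivAt_lineTh (t r φ s : ℝ) :
    HasDerivAt (fun x : ℝ => ((t, r, x, φ) : E4)) eTh s :=
  HasDerivAt.prodMk (hasDerivAt_const s t) ((HasDerivAt.prodMk (hasDerivAt_const s r)
    (HasDerivAt.prodMk (hasDerivAt_id s) (hasDerivAt_const s φ))))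

lemma hasDerivAt_linePh (t r ϑ s : ℝ) :
    HasDerivAt (fun x : ℝ => ((t, r, ϑ, x) : E4)) ePh s :=
  HasDerivAt.prodMk (hasDerivAt_const s t) ((HasDerivAt.prodMk (hasDerivAt_const s r)
    (HasDerivAt.prodMk (hasDerivAt_const s ϑ) (hasDerivAt_id s))))

lemma hasDerivAt_sliceT {u : F4} {t r ϑ φ : ℝ}
    (hu : DifferentiableAt ℝ (Pf u) ((t, r, ϑ, φ) : E4)) :
    HasDerivAt (fun s => u s r ϑ φ) (fderiv ℝ (Pf u) ((t, r, ϑ, φ) : E4) eT) t :=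
  by have := hu.hasFDerivAt.comp_hasDerivAt t (hasDerivAt_lineT r ϑ φ t); exact this

lemma hasDerivAt_sliceR {u : F4} {t r ϑ φ : ℝ}
    (hu : DifferentiableAt ℝ (Pf u) ((t, r, ϑ, φ) : E4)) :
    HasDerivAt (fun s => u t s ϑ φ) (fderiv ℝ (Pf u) ((t, r, ϑ, φ) : E4) eR) r :=
  by have := hu.hasFDerivAt.comp_hasDerivAt r (hasDerivAt_lineR t ϑ φ r); exact this

lemma hasDerivAt_sliceTh {u : F4} {t r ϑ φ : ℝ}
    (hu : DifferentiableAt ℝ (Pf u) ((t, r, ϑ, φ) : E4)) :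
    HasDerivAt (fun s => u t r s φ) (fderiv ℝ (Pf u) ((t, r, ϑ, φ) : E4) eTh) ϑ :=
  by have := hu.hasFDerivAt.comp_hasDerivAt ϑ (hasDerivAt_lineTh t r φ ϑ); exact this

lemma hasDerivAt_slicePh {u : F4} {t r ϑ φ : ℝ}
    (hu : DifferentiableAt ℝ (Pf u) ((t, r, ϑ, φ) : E4)) :
    HasDerivAt (fun s => u t r ϑ s) (fderiv ℝ (Pf u) ((t, r, ϑ, φ) : E4) ePh) φ :=
  by have := hu.hasFDerivAt.comp_hasDerivAt φ (hasDerivAt_linePh t r ϑ φ); exact this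

lemma dT_eq_fderiv {u : F4} {t r ϑ φ : ℝ}
    (hu : DifferentiableAt ℝ (Pf u) ((t, r, ϑ, φ) : E4)) :
    dT u t r ϑ φ = fderiv ℝ (Pf u) ((t, r, ϑ, φ) : E4) eT :=
  (hasDerivAt_sliceT hu).deriv

lemma dR_eq_fderiv {u : F4} {t r ϑ φ : ℝ}
    (hu : DifferentiableAt ℝ (Pf u) ((t, r, ϑ, φ) : E4)) :
    dR u t r ϑ φ = fderiv ℝ (Pf u) ((t, r, ϑ, φ) : E4) eR :=
  (hasDerivAt_sliceR hu).deriv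

lemma dTh_eq_fderiv {u : F4} {t r ϑ φ : ℝ}
    (hu : DifferentiableAt ℝ (Pf u) ((t, r, ϑ, φ) : E4)) :
    dTh u t r ϑ φ = fderiv ℝ (Pf u) ((t, r, ϑ, φ) : E4) eTh :=
  (hasDerivAt_sliceTh hu).deriv

lemma dPh_eq_fderiv {u : F4} {t r ϑ φ : ℝ}
    (hu : DifferentiableAt ℝ (Pf u) ((t, r, ϑ, φ) : E4)) :
    dPh u t r ϑ φ = fderiv ℝ (Pf u) ((t, r, ϑ, φ) : E4) ePh :=
  (hasDerivAt_slicePh hu).deriv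

lemma diffAt_Pf {u : F4} (hu : SmoothOnOm rp u) {p : E4} (hp : p ∈ OmSet rp) :
    DifferentiableAt ℝ (Pf u) p :=
  (contDiffAt_Pf hu hp).differentiableAt (by simp)

/-- the directional derivative of a smooth function is smooth on Ω. -/
lemma contDiffAt_fderiv_apply {u : F4} (hu : SmoothOnOm rp u) {p : E4}
    (hp : p ∈ OmSet rp) (v : E4) :
    ContDiffAt ℝ (⊤ : ℕ∞) (fun q => fderiv ℝ (Pf u) q v) p := by
  have h1 : ContDiffAt ℝ (⊤ : ℕ∞) (fderiv ℝ (Pf u)) p :=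
    (contDiffAt_Pf hu hp).fderiv_right inf_add_one_le
  exact h1.clm_apply contDiffAt_const

lemma PfdT_eventually {u : F4} (hu : SmoothOnOm rp u) {p : E4} (hp : p ∈ OmSet rp) :
    Pf (dT u) =ᶠ[𝓝 p] fun q => fderiv ℝ (Pf u) q eT := by
  filter_upwards [om_nhds hp] with q hq
  exact dT_eq_fderiv (diffAt_Pf hu hq)

lemma PfdR_eventually {u : F4} (hu : SmoothOnOm rp u) {p : E4} (hp : p ∈ OmSet rp) :
    Pf (dR u) =ᶠ[𝓝 p] fun q => fderiv ℝ (Pf u) q eR := by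
  filter_upwards [om_nhds hp] with q hq
  exact dR_eq_fderiv (diffAt_Pf hu hq)

lemma PfdTh_eventually {u : F4} (hu : SmoothOnOm rp u) {p : E4} (hp : p ∈ OmSet rp) :
    Pf (dTh u) =ᶠ[𝓝 p] fun q => fderiv ℝ (Pf u) q eTh := by
  filter_upwards [om_nhds hp] with q hq
  exact dTh_eq_fderiv (diffAt_Pf hu hq)

lemma PfdPh_eventually {u : F4} (hu : SmoothOnOm rp u) {p : E4} (hp : p ∈ OmSet rp) :
    Pf (dPh u) =ᶠ[𝓝 p] fun q => fderiv ℝ (Pf u) q ePh := by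
  filter_upwards [om_nhds hp] with q hq
  exact dPh_eq_fderiv (diffAt_Pf hu hq)

lemma smooth_dT {u : F4} (hu : SmoothOnOm rp u) : SmoothOnOm rp (dT u) :=
  smooth_iff.2 fun p hp =>
    (contDiffAt_fderiv_apply hu hp eT).congr_of_eventuallyEq (PfdT_eventually hu hp)

lemma smooth_dR {u : F4} (hu : SmoothOnOm rp u) : SmoothOnOm rp (dR u) :=
  smooth_iff.2 fun p hp =>
    (contDiffAt_fderiv_apply hu hp eR).congr_of_eventuallyEq (PfdR_eventually hu hp)

lemma smooth_dTh {u : F4} (hu : SmoothOnOm rp u) : SmoothOnOm rp (dTh u) :=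
  smooth_iff.2 fun p hp =>
    (contDiffAt_fderiv_apply hu hp eTh).congr_of_eventuallyEq (PfdTh_eventually hu hp)

lemma smooth_dPh {u : F4} (hu : SmoothOnOm rp u) : SmoothOnOm rp (dPh u) :=
  smooth_iff.2 fun p hp =>
    (contDiffAt_fderiv_apply hu hp ePh).congr_of_eventuallyEq (PfdPh_eventually hu hp)

/-- Second derivatives commute. -/
lemma fderiv_swap {u : F4} (hu : SmoothOnOm rp u) {p : E4} (hp : p ∈ OmSet rp)
    (v w : E4) :
    fderiv ℝ (fun q => fderiv ℝ (Pf u) q v) p w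
      = fderiv ℝ (fun q => fderiv ℝ (Pf u) q w) p v := by
  have hsymm : IsSymmSndFDerivAt ℝ (Pf u) p := by
    exact (contDiffAt_Pf hu hp).isSymmSndFDerivAt (by simpa [minSmoothness_of_isRCLikeNormedField] using two_le_inf)
  have hN : HasFDerivAt (fderiv ℝ (Pf u)) (fderiv ℝ (fderiv ℝ (Pf u)) p) p := by
    have := ((contDiffAt_Pf hu hp).fderiv_right inf_add_one_le).differentiableAt (by simp)
    exact this.hasFDerivAt
  have e1 : ∀ z : E4, fderiv ℝ (fun q => fderiv ℝ (Pf u) q z) p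
      = (fderiv ℝ (fderiv ℝ (Pf u)) p).flip z := by
    intro z
    have := hN.clm_apply (hasFDerivAt_const z p)
    simpa using this.fderiv
  rw [e1 v, e1 w]
  simp only [ContinuousLinearMap.flip_apply]
  exact hsymm.eq w v

end Infra
section Calc2

variable {rp : ℝ} {u v : F4} {t r ϑ φ : ℝ}

/-! ### Clairaut-type commutation of slice partial derivatives -/

lemma clairaut_TR (hu : SmoothOnOm rp u) (hp : ((t, r, ϑ, φ) : E4) ∈ OmSet rp) :
    dT (dR u) t r ϑ φ = dR (dT u) t r ϑ φ := by
  rw [dT_eq_fderiv (diffAt_Pf (smooth_dR hu) hp), (PfdR_eventually hu hp).fderiv_eq,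
      dR_eq_fderiv (diffAt_Pf (smooth_dT hu) hp), (PfdT_eventually hu hp).fderiv_eq]
  exact fderiv_swap hu hp eR eT

lemma clairaut_TTh (hu : SmoothOnOm rp u) (hp : ((t, r, ϑ, φ) : E4) ∈ OmSet rp) :
    dT (dTh u) t r ϑ φ = dTh (dT u) t r ϑ φ := by
  rw [dT_eq_fderiv (diffAt_Pf (smooth_dTh hu) hp), (PfdTh_eventually hu hp).fderiv_eq,
      dTh_eq_fderiv (diffAt_Pf (smooth_dT hu) hp), (PfdT_eventually hu hp).fderiv_eq]
  exact fderiv_swap hu hp eTh eT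

lemma clairaut_TPh (hu : SmoothOnOm rp u) (hp : ((t, r, ϑ, φ) : E4) ∈ OmSet rp) :
    dT (dPh u) t r ϑ φ = dPh (dT u) t r ϑ φ := by
  rw [dT_eq_fderiv (diffAt_Pf (smooth_dPh hu) hp), (PfdPh_eventually hu hp).fderiv_eq,
      dPh_eq_fderiv (diffAt_Pf (smooth_dT hu) hp), (PfdT_eventually hu hp).fderiv_eq]
  exact fderiv_swap hu hp ePh eT

lemma clairaut_RTh (hu : SmoothOnOm rp u) (hp : ((t, r, ϑ, φ) : E4) ∈ OmSet rp) :
    dR (dTh u) t r ϑ φ = dTh (dR u) t r ϑ φ := by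
  rw [dR_eq_fderiv (diffAt_Pf (smooth_dTh hu) hp), (PfdTh_eventually hu hp).fderiv_eq,
      dTh_eq_fderiv (diffAt_Pf (smooth_dR hu) hp), (PfdR_eventually hu hp).fderiv_eq]
  exact fderiv_swap hu hp eTh eR

lemma clairaut_RPh (hu : SmoothOnOm rp u) (hp : ((t, r, ϑ, φ) : E4) ∈ OmSet rp) :
    dR (dPh u) t r ϑ φ = dPh (dR u) t r ϑ φ := by
  rw [dR_eq_fderiv (diffAt_Pf (smooth_dPh hu) hp), (PfdPh_eventually hu hp).fderiv_eq,
      dPh_eq_fderiv (diffAt_Pf (smooth_dR hu) hp), (PfdR_eventually hu hp).fderiv_eq]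
  exact fderiv_swap hu hp ePh eR

/-! ### slice HasDerivAt -/

lemma hdT (hu : SmoothOnOm rp u) (hp : ((t, r, ϑ, φ) : E4) ∈ OmSet rp) :
    HasDerivAt (fun s => u s r ϑ φ) (dT u t r ϑ φ) t := by
  have h := hasDerivAt_sliceT (diffAt_Pf hu hp)
  rwa [← dT_eq_fderiv (diffAt_Pf hu hp)] at h

lemma hdR (hu : SmoothOnOm rp u) (hp : ((t, r, ϑ, φ) : E4) ∈ OmSet rp) :
    HasDerivAt (fun s => u t s ϑ φ) (dR u t r ϑ φ) r := by
  have h := hasDerivAt_sliceR (diffAt_Pf hu hp)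
  rwa [← dR_eq_fderiv (diffAt_Pf hu hp)] at h

lemma hdTh (hu : SmoothOnOm rp u) (hp : ((t, r, ϑ, φ) : E4) ∈ OmSet rp) :
    HasDerivAt (fun s => u t r s φ) (dTh u t r ϑ φ) ϑ := by
  have h := hasDerivAt_sliceTh (diffAt_Pf hu hp)
  rwa [← dTh_eq_fderiv (diffAt_Pf hu hp)] at h

lemma hdPh (hu : SmoothOnOm rp u) (hp : ((t, r, ϑ, φ) : E4) ∈ OmSet rp) :
    HasDerivAt (fun s => u t r ϑ s) (dPh u t r ϑ φ) φ := by
  have h := hasDerivAt_slicePh (diffAt_Pf hu hp)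
  rwa [← dPh_eq_fderiv (diffAt_Pf hu hp)] at h

/-! ### linearity of slice derivatives -/

lemma dT_add (hu : SmoothOnOm rp u) (hv : SmoothOnOm rp v)
    (hp : ((t, r, ϑ, φ) : E4) ∈ OmSet rp) :
    dT (fun t r ϑ φ => u t r ϑ φ + v t r ϑ φ) t r ϑ φ = dT u t r ϑ φ + dT v t r ϑ φ :=
  ((hdT hu hp).add (hdT hv hp)).deriv

lemma dR_add (hu : SmoothOnOm rp u) (hv : SmoothOnOm rp v)
    (hp : ((t, r, ϑ, φ) : E4) ∈ OmSet rp) :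
    dR (fun t r ϑ φ => u t r ϑ φ + v t r ϑ φ) t r ϑ φ = dR u t r ϑ φ + dR v t r ϑ φ :=
  ((hdR hu hp).add (hdR hv hp)).deriv

lemma dTh_add (hu : SmoothOnOm rp u) (hv : SmoothOnOm rp v)
    (hp : ((t, r, ϑ, φ) : E4) ∈ OmSet rp) :
    dTh (fun t r ϑ φ => u t r ϑ φ + v t r ϑ φ) t r ϑ φ = dTh u t r ϑ φ + dTh v t r ϑ φ :=
  ((hdTh hu hp).add (hdTh hv hp)).deriv

lemma dPh_add (hu : SmoothOnOm rp u) (hv : SmoothOnOm rp v)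
    (hp : ((t, r, ϑ, φ) : E4) ∈ OmSet rp) :
    dPh (fun t r ϑ φ => u t r ϑ φ + v t r ϑ φ) t r ϑ φ = dPh u t r ϑ φ + dPh v t r ϑ φ :=
  ((hdPh hu hp).add (hdPh hv hp)).deriv

lemma dT_sub (hu : SmoothOnOm rp u) (hv : SmoothOnOm rp v)
    (hp : ((t, r, ϑ, φ) : E4) ∈ OmSet rp) :
    dT (fun t r ϑ φ => u t r ϑ φ - v t r ϑ φ) t r ϑ φ = dT u t r ϑ φ - dT v t r ϑ φ :=
  ((hdT hu hp).sub (hdT hv hp)).deriv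

lemma dR_sub (hu : SmoothOnOm rp u) (hv : SmoothOnOm rp v)
    (hp : ((t, r, ϑ, φ) : E4) ∈ OmSet rp) :
    dR (fun t r ϑ φ => u t r ϑ φ - v t r ϑ φ) t r ϑ φ = dR u t r ϑ φ - dR v t r ϑ φ :=
  ((hdR hu hp).sub (hdR hv hp)).deriv

/-! ### multiplication rules -/

/-- `∂ₜ` commutes with multiplication by any function of `(r, ϑ, φ)`. Unconditional. -/
lemma dT_mulc (c : ℝ → ℝ → ℝ → ℂ) (u : F4) :
    dT (fun t r ϑ φ => c r ϑ φ * u t r ϑ φ) t r ϑ φ = c r ϑ φ * dT u t r ϑ φ :=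
  deriv_const_mul_field _

lemma dR_mulc (c : ℝ → ℝ → ℝ → ℂ) (u : F4) :
    dR (fun t r ϑ φ => c t ϑ φ * u t r ϑ φ) t r ϑ φ = c t ϑ φ * dR u t r ϑ φ :=
  deriv_const_mul_field _

lemma dTh_mulc (c : ℝ → ℝ → ℝ → ℂ) (u : F4) :
    dTh (fun t r ϑ φ => c t r φ * u t r ϑ φ) t r ϑ φ = c t r φ * dTh u t r ϑ φ :=
  deriv_const_mul_field _

lemma dPh_mulc (c : ℝ → ℝ → ℝ → ℂ) (u : F4) :
    dPh (fun t r ϑ φ => c t r ϑ * u t r ϑ φ) t r ϑ φ = c t r ϑ * dPh u t r ϑ φ :=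
  deriv_const_mul_field _

/-- product rule for `∂ᵣ` against a function of `r`. -/
lemma dR_rmul {c : ℝ → ℂ} {c' : ℂ} (hc : HasDerivAt c c' r)
    (hu : SmoothOnOm rp u) (hp : ((t, r, ϑ, φ) : E4) ∈ OmSet rp) :
    dR (fun t r ϑ φ => c r * u t r ϑ φ) t r ϑ φ
      = c' * u t r ϑ φ + c r * dR u t r ϑ φ :=
  (hc.mul (hdR hu hp)).deriv

/-- product rule for `∂_ϑ` against a function of `ϑ`. -/
lemma dTh_thmul {c : ℝ → ℂ} {c' : ℂ} (hc : HasDerivAt c c' ϑ)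
    (hu : SmoothOnOm rp u) (hp : ((t, r, ϑ, φ) : E4) ∈ OmSet rp) :
    dTh (fun t r ϑ φ => c ϑ * u t r ϑ φ) t r ϑ φ
      = c' * u t r ϑ φ + c ϑ * dTh u t r ϑ φ :=
  (hc.mul (hdTh hu hp)).deriv

/-! ### smoothness closure -/

lemma smooth_add (hu : SmoothOnOm rp u) (hv : SmoothOnOm rp v) :
    SmoothOnOm rp (fun t r ϑ φ => u t r ϑ φ + v t r ϑ φ) := hu.add hv

lemma smooth_sub (hu : SmoothOnOm rp u) (hv : SmoothOnOm rp v) :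
    SmoothOnOm rp (fun t r ϑ φ => u t r ϑ φ - v t r ϑ φ) := hu.sub hv

lemma smooth_cmul (c : ℂ) (hu : SmoothOnOm rp u) :
    SmoothOnOm rp (fun t r ϑ φ => c * u t r ϑ φ) := contDiffOn_const.mul hu

lemma smooth_rmulC {c : ℝ → ℂ} (hc : ContDiffOn ℝ (⊤ : ℕ∞) c (Ioi rp))
    (hu : SmoothOnOm rp u) :
    SmoothOnOm rp (fun t r ϑ φ => c r * u t r ϑ φ) := by
  have hproj : ContDiff ℝ (⊤ : ℕ∞) (fun p : E4 => p.2.1) :=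
    contDiff_fst.comp contDiff_snd
  have h1 : ContDiffOn ℝ (⊤ : ℕ∞) (fun p : E4 => c p.2.1) (OmSet rp) :=
    hc.comp hproj.contDiffOn (fun p hp => hp.1)
  exact h1.mul hu

lemma smooth_thmulC {c : ℝ → ℂ} (hc : ContDiffOn ℝ (⊤ : ℕ∞) c (Ioo 0 Real.pi))
    (hu : SmoothOnOm rp u) :
    SmoothOnOm rp (fun t r ϑ φ => c ϑ * u t r ϑ φ) := by
  have hproj : ContDiff ℝ (⊤ : ℕ∞) (fun p : E4 => p.2.2.1) :=
    (contDiff_fst.comp contDiff_snd).comp contDiff_snd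
  have h1 : ContDiffOn ℝ (⊤ : ℕ∞) (fun p : E4 => c p.2.2.1) (OmSet rp) :=
    hc.comp hproj.contDiffOn (fun p hp => ⟨hp.2.1, hp.2.2⟩)
  exact h1.mul hu

/-- congruence: slice derivatives only depend on values on `Ω`. -/
lemma dT_congr (h : ∀ t r ϑ φ : ℝ, ((t, r, ϑ, φ) : E4) ∈ OmSet rp → u t r ϑ φ = v t r ϑ φ)
    (hp : ((t, r, ϑ, φ) : E4) ∈ OmSet rp) :
    dT u t r ϑ φ = dT v t r ϑ φ := by
  apply Filter.EventuallyEq.deriv_eq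
  exact Filter.Eventually.of_forall fun s => h s r ϑ φ (memT hp s)

lemma dR_congr (h : ∀ t r ϑ φ : ℝ, ((t, r, ϑ, φ) : E4) ∈ OmSet rp → u t r ϑ φ = v t r ϑ φ)
    (hp : ((t, r, ϑ, φ) : E4) ∈ OmSet rp) :
    dR u t r ϑ φ = dR v t r ϑ φ := by
  apply Filter.EventuallyEq.deriv_eq
  filter_upwards [memR hp] with s hs
  exact h t s ϑ φ hs

lemma dTh_congr (h : ∀ t r ϑ φ : ℝ, ((t, r, ϑ, φ) : E4) ∈ OmSet rp → u t r ϑ φ = v t r ϑ φ)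
    (hp : ((t, r, ϑ, φ) : E4) ∈ OmSet rp) :
    dTh u t r ϑ φ = dTh v t r ϑ φ := by
  apply Filter.EventuallyEq.deriv_eq
  filter_upwards [memTh hp] with s hs
  exact h t r s φ hs

lemma dPh_congr (h : ∀ t r ϑ φ : ℝ, ((t, r, ϑ, φ) : E4) ∈ OmSet rp → u t r ϑ φ = v t r ϑ φ)
    (hp : ((t, r, ϑ, φ) : E4) ∈ OmSet rp) :
    dPh u t r ϑ φ = dPh v t r ϑ φ := by
  apply Filter.EventuallyEq.deriv_eq
  exact Filter.Eventually.of_forall fun s => h t r ϑ s (memPh hp s)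

lemma hasDerivAt_ofReal' {c : ℝ → ℝ} {c' x : ℝ} (hc : HasDerivAt c c' x) :
    HasDerivAt (fun s => ((c s : ℝ) : ℂ)) ((c' : ℝ) : ℂ) x :=
  hc.ofReal_comp

end Calc2
section Radial

variable {M k rp : ℝ} {u v : F4} {t r ϑ φ : ℝ}

lemma Del_pos (hk : 0 < k) (hrp : 0 < rp)
    (hroot : rp + k ^ 2 * rp ^ 3 - 2 * M = 0) (hr : rp < r) :
    0 < Del M k r := by
  have hr0 : 0 < r := hrp.trans hr
  have key : Del M k r = r * ((r - rp) * (1 + k ^ 2 * (r ^ 2 + r * rp + rp ^ 2))) := by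
    unfold Del; linear_combination r * hroot
  rw [key]
  have h1 : 0 < r - rp := sub_pos.2 hr
  have h2 : 0 < 1 + k ^ 2 * (r ^ 2 + r * rp + rp ^ 2) := by positivity
  positivity

lemma ww_pos (hk : 0 < k) (hrp : 0 < rp)
    (hroot : rp + k ^ 2 * rp ^ 3 - 2 * M = 0) (hr : rp < r) :
    0 < ww M k r := by
  have hr0 : 0 < r := hrp.trans hr
  exact div_pos (Del_pos hk hrp hroot hr) (by positivity)

lemma hasDerivAt_Del : HasDerivAt (Del M k) (2 * r + k ^ 2 * (4 * r ^ 3) - 2 * M) r := by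
  have h := (((hasDerivAt_pow 2 r).add ((hasDerivAt_pow 4 r).const_mul (k ^ 2))).sub
    ((hasDerivAt_id r).const_mul (2 * M)))
  refine h.congr_deriv ?_
  push_cast
  ring

lemma hasDerivAt_ww (hr0 : r ≠ 0) :
    HasDerivAt (fun s => ww M k s) ((6 * M - 2 * r) / r ^ 4) r := by
  have h := (hasDerivAt_Del (M := M) (k := k)).div (hasDerivAt_pow 4 r)
    (pow_ne_zero 4 hr0)
  refine h.congr_deriv ?_
  unfold Del
  field_simp
  ring

lemma hasDerivAt_wwInv (hw : ww M k r ≠ 0) (hr0 : r ≠ 0) :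
    HasDerivAt (fun s => (ww M k s)⁻¹) (-((6 * M - 2 * r) / r ^ 4) / (ww M k r) ^ 2) r :=
  (hasDerivAt_ww hr0).inv hw

lemma hasDerivAt_Q (hr0 : r ≠ 0) :
    HasDerivAt (fun s => (6 * M - 2 * s) / s ^ 2) ((2 * r - 12 * M) / r ^ 3) r := by
  have hnum : HasDerivAt (fun s : ℝ => 6 * M - 2 * s) (-2) r := by
    have h := (hasDerivAt_const r (6 * M)).sub ((hasDerivAt_id r).const_mul 2)
    refine h.congr_deriv ?_; ring
  have h := hnum.div (hasDerivAt_pow 2 r) (pow_ne_zero 2 hr0)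
  refine h.congr_deriv ?_
  field_simp
  ring

lemma hasDerivAt_mf (hr0 : r ≠ 0) :
    HasDerivAt (fun s => 6 * M / s) (-(6 * M) / r ^ 2) r := by
  have h := (hasDerivAt_const r (6 * M)).div (hasDerivAt_id r) hr0
  refine h.congr_deriv ?_
  simp only [id]
  field_simp
  ring

lemma hasDerivAt_V :
    HasDerivAt (fun s => Del M k s / s ^ 2)
      (((2 * r + k ^ 2 * (4 * r ^ 3) - 2 * M) * r ^ 2 - Del M k r * (2 * r)) / (r ^ 2) ^ 2) r
    ∨ r = 0 := by
  by_cases hr0 : r = 0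
  · exact Or.inr hr0
  · left
    have h := (hasDerivAt_Del (M := M) (k := k)).div (hasDerivAt_pow 2 r) (pow_ne_zero 2 hr0)
    refine h.congr_deriv ?_
    norm_num

/-! ### ContDiffOn for radial coefficients -/

lemma cd_ofReal {c : ℝ → ℝ} {s : Set ℝ} (hc : ContDiffOn ℝ (⊤ : ℕ∞) c s) :
    ContDiffOn ℝ (⊤ : ℕ∞) (fun x => ((c x : ℝ) : ℂ)) s :=
  Complex.ofRealCLM.contDiff.comp_contDiffOn hc

lemma cd_Del : ContDiff ℝ (⊤ : ℕ∞) (Del M k) := by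
  unfold Del; fun_prop

lemma ne_zero_on_Ioi (hrp : 0 < rp) (hr : r ∈ Ioi rp) : r ≠ 0 :=
  (hrp.trans hr).ne'

lemma cd_V (hrp : 0 < rp) (a : ℝ) :
    ContDiffOn ℝ (⊤ : ℕ∞) (fun x : ℝ => ((a * (Del M k x / x ^ 2) : ℝ) : ℂ)) (Ioi rp) := by
  apply cd_ofReal
  exact contDiffOn_const.mul (cd_Del.contDiffOn.div (contDiff_id.pow 2).contDiffOn
    (fun x hx => pow_ne_zero 2 (ne_zero_on_Ioi hrp hx)))

lemma cd_ww (hrp : 0 < rp) :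
    ContDiffOn ℝ (⊤ : ℕ∞) (fun x : ℝ => ww M k x) (Ioi rp) := by
  unfold ww
  exact cd_Del.contDiffOn.div (contDiff_id.pow 4).contDiffOn
    (fun x hx => pow_ne_zero 4 (ne_zero_on_Ioi hrp hx))

lemma cd_wwC (hrp : 0 < rp) :
    ContDiffOn ℝ (⊤ : ℕ∞) (fun x : ℝ => ((ww M k x : ℝ) : ℂ)) (Ioi rp) :=
  cd_ofReal (cd_ww hrp)

lemma cd_wwInv (hk : 0 < k) (hrp : 0 < rp)
    (hroot : rp + k ^ 2 * rp ^ 3 - 2 * M = 0) :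
    ContDiffOn ℝ (⊤ : ℕ∞) (fun x : ℝ => (((ww M k x)⁻¹ : ℝ) : ℂ)) (Ioi rp) :=
  cd_ofReal ((cd_ww hrp).inv (fun x hx => (ww_pos hk hrp hroot hx).ne'))

lemma cd_Q (hrp : 0 < rp) :
    ContDiffOn ℝ (⊤ : ℕ∞) (fun x : ℝ => (((6 * M - 2 * x) / x ^ 2 : ℝ) : ℂ)) (Ioi rp) := by
  apply cd_ofReal
  exact (contDiff_const.sub (contDiff_const.mul contDiff_id)).contDiffOn.div
    (contDiff_id.pow 2).contDiffOn (fun x hx => pow_ne_zero 2 (ne_zero_on_Ioi hrp hx))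

lemma cd_mf (hrp : 0 < rp) :
    ContDiffOn ℝ (⊤ : ℕ∞) (fun x : ℝ => ((6 * M / x : ℝ) : ℂ)) (Ioi rp) := by
  apply cd_ofReal
  exact contDiffOn_const.div contDiffOn_id (fun x hx => ne_zero_on_Ioi hrp hx)

/-! ### the generic first-order operator -/

/-- `opG a u = ∂ₜ u + a (Δ/r²) ∂ᵣ u`; `a = 1` gives `L`, `a = -1` gives `L̲`. -/
def opG (M k a : ℝ) (u : F4) : F4 := fun t r ϑ φ =>
  dT u t r ϑ φ + ((a * (Del M k r / r ^ 2) : ℝ) : ℂ) * dR u t r ϑ φ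

lemma opG_one (u : F4) : opG M k 1 u = opL M k u := by
  funext t r ϑ φ; simp [opG, opL]

lemma opG_negone (u : F4) : opG M k (-1) u = opLb M k u := by
  funext t r ϑ φ; simp [opG, opLb]; push_cast; ring

lemma smooth_opG (hrp : 0 < rp) (a : ℝ) (hu : SmoothOnOm rp u) :
    SmoothOnOm rp (opG M k a u) :=
  smooth_add (smooth_dT hu) (smooth_rmulC (cd_V hrp a) (smooth_dR hu))

lemma opG_congr {a : ℝ}
    (h : ∀ t r ϑ φ : ℝ, ((t, r, ϑ, φ) : E4) ∈ OmSet rp → u t r ϑ φ = v t r ϑ φ)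
    (hp : ((t, r, ϑ, φ) : E4) ∈ OmSet rp) :
    opG M k a u t r ϑ φ = opG M k a v t r ϑ φ := by
  unfold opG
  rw [dT_congr h hp, dR_congr h hp]

lemma opG_add {a : ℝ} (hu : SmoothOnOm rp u) (hv : SmoothOnOm rp v)
    (hp : ((t, r, ϑ, φ) : E4) ∈ OmSet rp) :
    opG M k a (fun t r ϑ φ => u t r ϑ φ + v t r ϑ φ) t r ϑ φ
      = opG M k a u t r ϑ φ + opG M k a v t r ϑ φ := by
  unfold opG
  rw [dT_add hu hv hp, dR_add hu hv hp]
  ring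

lemma opG_sub {a : ℝ} (hu : SmoothOnOm rp u) (hv : SmoothOnOm rp v)
    (hp : ((t, r, ϑ, φ) : E4) ∈ OmSet rp) :
    opG M k a (fun t r ϑ φ => u t r ϑ φ - v t r ϑ φ) t r ϑ φ
      = opG M k a u t r ϑ φ - opG M k a v t r ϑ φ := by
  unfold opG
  rw [dT_sub hu hv hp, dR_sub hu hv hp]
  ring

lemma opG_cmul {a : ℝ} (c : ℂ) (u : F4) :
    opG M k a (fun t r ϑ φ => c * u t r ϑ φ) t r ϑ φ
      = c * opG M k a u t r ϑ φ := by
  unfold opG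
  have h1 : dT (fun t r ϑ φ => c * u t r ϑ φ) t r ϑ φ = c * dT u t r ϑ φ :=
    deriv_const_mul_field _
  have h2 : dR (fun t r ϑ φ => c * u t r ϑ φ) t r ϑ φ = c * dR u t r ϑ φ :=
    deriv_const_mul_field _
  rw [h1, h2]
  ring

/-- Leibniz rule for `opG` against a radial factor. -/
lemma opG_rmul {a : ℝ} {c : ℝ → ℝ} {c' : ℝ} (hc : HasDerivAt c c' r)
    (hu : SmoothOnOm rp u) (hp : ((t, r, ϑ, φ) : E4) ∈ OmSet rp) :
    opG M k a (fun t r ϑ φ => ((c r : ℝ) : ℂ) * u t r ϑ φ) t r ϑ φ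
      = ((c r : ℝ) : ℂ) * opG M k a u t r ϑ φ
        + ((a * (Del M k r / r ^ 2) * c' : ℝ) : ℂ) * u t r ϑ φ := by
  unfold opG
  have h1 : dT (fun t r ϑ φ => ((c r : ℝ) : ℂ) * u t r ϑ φ) t r ϑ φ
      = ((c r : ℝ) : ℂ) * dT u t r ϑ φ := deriv_const_mul_field _
  have h2 : dR (fun t r ϑ φ => ((c r : ℝ) : ℂ) * u t r ϑ φ) t r ϑ φ
      = ((c' : ℝ) : ℂ) * u t r ϑ φ + ((c r : ℝ) : ℂ) * dR u t r ϑ φ :=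
    ((hasDerivAt_ofReal' hc).mul (hdR hu hp)).deriv
  rw [h1, h2]
  push_cast
  ring

end Radial
section Angular

variable {rp : ℝ} {u v : F4} {t r ϑ φ : ℝ} {σ : ℝ}

/-- `sin ϑ · ∂_ϑ u`. -/
def svv (u : F4) : F4 := fun t r ϑ φ => (Real.sin ϑ : ℂ) * dTh u t r ϑ φ

/-- generic angular operator; `σ = -1` gives `𝓛⁽⁺²⁾`, `σ = 1` gives `𝓛⁽⁻²⁾`. -/
def angG (σ : ℝ) (u : F4) : F4 := fun t r ϑ φ =>
  -(Real.sin ϑ : ℂ)⁻¹ * dTh (svv u) t r ϑ φ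
  - (((Real.sin ϑ) ^ 2 : ℝ) : ℂ)⁻¹ * dPh (dPh u) t r ϑ φ
  + (σ : ℂ) * (4 * Complex.I * ((Real.cos ϑ / (Real.sin ϑ) ^ 2 : ℝ) : ℂ)) * dPh u t r ϑ φ
  + 4 * (((Real.cos ϑ / Real.sin ϑ) ^ 2 : ℝ) : ℂ) * u t r ϑ φ
  + 4 * u t r ϑ φ

lemma angG_eq_angP (u : F4) : angG (-1) u = angP u := by
  funext t r ϑ φ
  simp only [angG, angP, svv, dTh]
  push_cast
  ring

lemma angG_eq_angM (u : F4) : angG 1 u = angM u := by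
  funext t r ϑ φ
  simp only [angG, angM, svv, dTh]
  push_cast
  ring

lemma sin_ne' (hϑ : ϑ ∈ Ioo 0 Real.pi) : Real.sin ϑ ≠ 0 :=
  (Real.sin_pos_of_pos_of_lt_pi hϑ.1 hϑ.2).ne'

lemma cd_sinC : ContDiffOn ℝ (⊤ : ℕ∞) (fun x => ((Real.sin x : ℝ) : ℂ)) (Ioo 0 Real.pi) :=
  cd_ofReal Real.contDiff_sin.contDiffOn

lemma cd_c1 : ContDiffOn ℝ (⊤ : ℕ∞) (fun x => -(Real.sin x : ℂ)⁻¹) (Ioo 0 Real.pi) :=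
  (cd_sinC.inv fun x hx => Complex.ofReal_ne_zero.2 (sin_ne' hx)).neg

lemma cd_c2 : ContDiffOn ℝ (⊤ : ℕ∞)
    (fun x => ((((Real.sin x) ^ 2 : ℝ)) : ℂ)⁻¹) (Ioo 0 Real.pi) :=
  (cd_ofReal (Real.contDiff_sin.pow 2).contDiffOn).inv
    fun x hx => Complex.ofReal_ne_zero.2 (pow_ne_zero 2 (sin_ne' hx))

lemma cd_c3 (σ : ℝ) : ContDiffOn ℝ (⊤ : ℕ∞)
    (fun x => (σ : ℂ) * (4 * Complex.I * ((Real.cos x / (Real.sin x) ^ 2 : ℝ) : ℂ)))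
      (Ioo 0 Real.pi) :=
  contDiffOn_const.mul (contDiffOn_const.mul (cd_ofReal
    (Real.contDiff_cos.contDiffOn.div (Real.contDiff_sin.pow 2).contDiffOn
      fun x hx => pow_ne_zero 2 (sin_ne' hx))))

lemma cd_c4 : ContDiffOn ℝ (⊤ : ℕ∞)
    (fun x => (4 : ℂ) * (((Real.cos x / Real.sin x) ^ 2 : ℝ) : ℂ)) (Ioo 0 Real.pi) :=
  contDiffOn_const.mul (cd_ofReal ((Real.contDiff_cos.contDiffOn.div
    Real.contDiff_sin.contDiffOn fun x hx => sin_ne' hx).pow 2))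

lemma smooth_svv (hu : SmoothOnOm rp u) : SmoothOnOm rp (svv u) :=
  smooth_thmulC cd_sinC (smooth_dTh hu)

lemma smooth_angG (hu : SmoothOnOm rp u) : SmoothOnOm rp (angG σ u) := by
  unfold angG
  exact smooth_add (smooth_add (smooth_add
    (smooth_sub (smooth_thmulC cd_c1 (smooth_dTh (smooth_svv hu)))
      (smooth_thmulC cd_c2 (smooth_dPh (smooth_dPh hu))))
    (smooth_thmulC (cd_c3 σ) (smooth_dPh hu)))
    (smooth_thmulC cd_c4 hu)) (smooth_cmul 4 hu)

/-- the angular operator only depends on the values on the `(ϑ, φ)`-slice. -/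
lemma angG_congr (hϑ : ϑ ∈ Ioo 0 Real.pi)
    (h : ∀ x y : ℝ, x ∈ Ioo 0 Real.pi → u t r x y = v t r x y) :
    angG σ u t r ϑ φ = angG σ v t r ϑ φ := by
  have hdTh_uv : ∀ x ∈ Ioo 0 Real.pi, ∀ y, dTh u t r x y = dTh v t r x y := by
    intro x hx y
    apply Filter.EventuallyEq.deriv_eq
    filter_upwards [Ioo_mem_nhds hx.1 hx.2] with s hs
    exact h s y hs
  have hdPh_uv : ∀ y : ℝ, dPh u t r ϑ y = dPh v t r ϑ y := by
    intro y
    apply Filter.EventuallyEq.deriv_eq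
    exact Filter.Eventually.of_forall fun s => h ϑ s hϑ
  have h1 : dTh (svv u) t r ϑ φ = dTh (svv v) t r ϑ φ := by
    apply Filter.EventuallyEq.deriv_eq
    filter_upwards [Ioo_mem_nhds hϑ.1 hϑ.2] with s hs
    show (Real.sin s : ℂ) * dTh u t r s φ = (Real.sin s : ℂ) * dTh v t r s φ
    rw [hdTh_uv s hs φ]
  have h2 : dPh (dPh u) t r ϑ φ = dPh (dPh v) t r ϑ φ := by
    apply Filter.EventuallyEq.deriv_eq
    exact Filter.Eventually.of_forall fun s => hdPh_uv s
  unfold angG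
  rw [h1, h2, hdPh_uv φ, h ϑ φ hϑ]

/-- the angular operator commutes with multiplication by functions of `r` (unconditional). -/
lemma angG_rmul (c : ℝ → ℂ) (u : F4) :
    angG σ (fun t r ϑ φ => c r * u t r ϑ φ) t r ϑ φ = c r * angG σ u t r ϑ φ := by
  have hdTh : ∀ t r x y : ℝ, dTh (fun t r ϑ φ => c r * u t r ϑ φ) t r x y
      = c r * dTh u t r x y := fun t r x y => deriv_const_mul_field _
  have hdPh : ∀ t r x y : ℝ, dPh (fun t r ϑ φ => c r * u t r ϑ φ) t r x y
      = c r * dPh u t r x y := fun t r x y => deriv_const_mul_field _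
  have h1 : dTh (svv (fun t r ϑ φ => c r * u t r ϑ φ)) t r ϑ φ
      = c r * dTh (svv u) t r ϑ φ := by
    have e : (fun s => svv (fun t r ϑ φ => c r * u t r ϑ φ) t r s φ)
        = fun s => c r * ((Real.sin s : ℂ) * dTh u t r s φ) := by
      funext s
      show (Real.sin s : ℂ) * dTh (fun t r ϑ φ => c r * u t r ϑ φ) t r s φ = _
      rw [hdTh t r s φ]; ring
    show deriv (fun s => svv (fun t r ϑ φ => c r * u t r ϑ φ) t r s φ) ϑ = _
    rw [e]
    exact deriv_const_mul_field _
  have h2 : dPh (dPh (fun t r ϑ φ => c r * u t r ϑ φ)) t r ϑ φ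
      = c r * dPh (dPh u) t r ϑ φ := by
    have e : (fun s => dPh (fun t r ϑ φ => c r * u t r ϑ φ) t r ϑ s)
        = fun s => c r * dPh u t r ϑ s := by
      funext s; exact hdPh t r ϑ s
    show deriv (fun s => dPh (fun t r ϑ φ => c r * u t r ϑ φ) t r ϑ s) φ = _
    rw [e]
    exact deriv_const_mul_field _
  unfold angG
  rw [h1, h2, hdPh t r ϑ φ]
  ring

/-- the angular operator is additive on smooth functions. -/
lemma angG_add (hu : SmoothOnOm rp u) (hv : SmoothOnOm rp v)
    (hp : ((t, r, ϑ, φ) : E4) ∈ OmSet rp) :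
    angG σ (fun t r ϑ φ => u t r ϑ φ + v t r ϑ φ) t r ϑ φ
      = angG σ u t r ϑ φ + angG σ v t r ϑ φ := by
  have h1 : dTh (svv (fun t r ϑ φ => u t r ϑ φ + v t r ϑ φ)) t r ϑ φ
      = dTh (svv u) t r ϑ φ + dTh (svv v) t r ϑ φ := by
    rw [← dTh_add (smooth_svv hu) (smooth_svv hv) hp]
    apply dTh_congr (v := fun t r ϑ φ => svv u t r ϑ φ + svv v t r ϑ φ) _ hp
    intro t r x y hq
    show (Real.sin x : ℂ) * dTh (fun t r ϑ φ => u t r ϑ φ + v t r ϑ φ) t r x y = _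
    rw [dTh_add hu hv hq]
    unfold svv; ring
  have h2 : dPh (dPh (fun t r ϑ φ => u t r ϑ φ + v t r ϑ φ)) t r ϑ φ
      = dPh (dPh u) t r ϑ φ + dPh (dPh v) t r ϑ φ := by
    rw [← dPh_add (smooth_dPh hu) (smooth_dPh hv) hp]
    apply dPh_congr (v := fun t r ϑ φ => dPh u t r ϑ φ + dPh v t r ϑ φ) _ hp
    intro t r x y hq
    exact dPh_add hu hv hq
  unfold angG
  rw [h1, h2, dPh_add hu hv hp]
  ring

/-- `∂ₜ` commutes with the angular operator. -/
lemma dT_angG (hu : SmoothOnOm rp u) (hp : ((t, r, ϑ, φ) : E4) ∈ OmSet rp) :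
    dT (angG σ u) t r ϑ φ = angG σ (dT u) t r ϑ φ := by
  have e1 : ∀ t r x y : ℝ, ((t, r, x, y) : E4) ∈ OmSet rp →
      dT (svv u) t r x y = svv (dT u) t r x y := by
    intro t r x y hq
    show deriv (fun s => (Real.sin x : ℂ) * dTh u s r x y) t = _
    rw [deriv_const_mul_field]
    show (Real.sin x : ℂ) * dT (dTh u) t r x y = _
    rw [clairaut_TTh hu hq]
    rfl
  have hY1 : dT (dTh (svv u)) t r ϑ φ = dTh (svv (dT u)) t r ϑ φ := by
    rw [clairaut_TTh (smooth_svv hu) hp]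
    exact dTh_congr e1 hp
  have hY2 : dT (dPh (dPh u)) t r ϑ φ = dPh (dPh (dT u)) t r ϑ φ := by
    rw [clairaut_TPh (smooth_dPh hu) hp]
    exact dPh_congr (fun t r x y hq => clairaut_TPh hu hq) hp
  have hY3 : dT (dPh u) t r ϑ φ = dPh (dT u) t r ϑ φ := clairaut_TPh hu hp
  -- expand dT of the sum
  have d1 : SmoothOnOm rp (fun t r ϑ φ => -(Real.sin ϑ : ℂ)⁻¹ * dTh (svv u) t r ϑ φ) :=
    smooth_thmulC cd_c1 (smooth_dTh (smooth_svv hu))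
  have d2 : SmoothOnOm rp (fun t r ϑ φ =>
      (((Real.sin ϑ) ^ 2 : ℝ) : ℂ)⁻¹ * dPh (dPh u) t r ϑ φ) :=
    smooth_thmulC cd_c2 (smooth_dPh (smooth_dPh hu))
  have d3 : SmoothOnOm rp (fun t r ϑ φ =>
      (σ : ℂ) * (4 * Complex.I * ((Real.cos ϑ / (Real.sin ϑ) ^ 2 : ℝ) : ℂ)) * dPh u t r ϑ φ) :=
    smooth_thmulC (cd_c3 σ) (smooth_dPh hu)
  have d4 : SmoothOnOm rp (fun t r ϑ φ =>
      (4 : ℂ) * (((Real.cos ϑ / Real.sin ϑ) ^ 2 : ℝ) : ℂ) * u t r ϑ φ) :=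
    smooth_thmulC cd_c4 hu
  have d5 : SmoothOnOm rp (fun t r ϑ φ => (4 : ℂ) * u t r ϑ φ) := smooth_cmul 4 hu
  show dT (fun t r ϑ φ =>
      -(Real.sin ϑ : ℂ)⁻¹ * dTh (svv u) t r ϑ φ
      - (((Real.sin ϑ) ^ 2 : ℝ) : ℂ)⁻¹ * dPh (dPh u) t r ϑ φ
      + (σ : ℂ) * (4 * Complex.I * ((Real.cos ϑ / (Real.sin ϑ) ^ 2 : ℝ) : ℂ)) * dPh u t r ϑ φ
      + 4 * (((Real.cos ϑ / Real.sin ϑ) ^ 2 : ℝ) : ℂ) * u t r ϑ φ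
      + 4 * u t r ϑ φ) t r ϑ φ = _
  rw [dT_add (smooth_add (smooth_add (smooth_sub d1 d2) d3) d4) d5 hp,
      dT_add (smooth_add (smooth_sub d1 d2) d3) d4 hp,
      dT_add (smooth_sub d1 d2) d3 hp,
      dT_sub d1 d2 hp]
  have m1 : dT (fun t r ϑ φ => -(Real.sin ϑ : ℂ)⁻¹ * dTh (svv u) t r ϑ φ) t r ϑ φ
      = -(Real.sin ϑ : ℂ)⁻¹ * dT (dTh (svv u)) t r ϑ φ := deriv_const_mul_field _
  have m2 : dT (fun t r ϑ φ => (((Real.sin ϑ) ^ 2 : ℝ) : ℂ)⁻¹ * dPh (dPh u) t r ϑ φ) t r ϑ φ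
      = (((Real.sin ϑ) ^ 2 : ℝ) : ℂ)⁻¹ * dT (dPh (dPh u)) t r ϑ φ := deriv_const_mul_field _
  have m3 : dT (fun t r ϑ φ =>
        (σ : ℂ) * (4 * Complex.I * ((Real.cos ϑ / (Real.sin ϑ) ^ 2 : ℝ) : ℂ)) * dPh u t r ϑ φ)
        t r ϑ φ
      = (σ : ℂ) * (4 * Complex.I * ((Real.cos ϑ / (Real.sin ϑ) ^ 2 : ℝ) : ℂ))
          * dT (dPh u) t r ϑ φ := deriv_const_mul_field _
  have m4 : dT (fun t r ϑ φ => (4 : ℂ) * (((Real.cos ϑ / Real.sin ϑ) ^ 2 : ℝ) : ℂ) * u t r ϑ φ)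
        t r ϑ φ
      = (4 : ℂ) * (((Real.cos ϑ / Real.sin ϑ) ^ 2 : ℝ) : ℂ) * dT u t r ϑ φ :=
    deriv_const_mul_field _
  have m5 : dT (fun t r ϑ φ => (4 : ℂ) * u t r ϑ φ) t r ϑ φ = (4 : ℂ) * dT u t r ϑ φ :=
    deriv_const_mul_field _
  rw [m1, m2, m3, m4, m5, hY1, hY2, hY3]
  unfold angG
  ring

/-- `∂ᵣ` commutes with the angular operator. -/
lemma dR_angG (hu : SmoothOnOm rp u) (hp : ((t, r, ϑ, φ) : E4) ∈ OmSet rp) :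
    dR (angG σ u) t r ϑ φ = angG σ (dR u) t r ϑ φ := by
  have e1 : ∀ t r x y : ℝ, ((t, r, x, y) : E4) ∈ OmSet rp →
      dR (svv u) t r x y = svv (dR u) t r x y := by
    intro t r x y hq
    show deriv (fun s => (Real.sin x : ℂ) * dTh u t s x y) r = _
    rw [deriv_const_mul_field]
    show (Real.sin x : ℂ) * dR (dTh u) t r x y = _
    rw [clairaut_RTh hu hq]
    rfl
  have hY1 : dR (dTh (svv u)) t r ϑ φ = dTh (svv (dR u)) t r ϑ φ := by
    rw [clairaut_RTh (smooth_svv hu) hp]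
    exact dTh_congr e1 hp
  have hY2 : dR (dPh (dPh u)) t r ϑ φ = dPh (dPh (dR u)) t r ϑ φ := by
    rw [clairaut_RPh (smooth_dPh hu) hp]
    exact dPh_congr (fun t r x y hq => clairaut_RPh hu hq) hp
  have hY3 : dR (dPh u) t r ϑ φ = dPh (dR u) t r ϑ φ := clairaut_RPh hu hp
  have d1 : SmoothOnOm rp (fun t r ϑ φ => -(Real.sin ϑ : ℂ)⁻¹ * dTh (svv u) t r ϑ φ) :=
    smooth_thmulC cd_c1 (smooth_dTh (smooth_svv hu))
  have d2 : SmoothOnOm rp (fun t r ϑ φ =>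
      (((Real.sin ϑ) ^ 2 : ℝ) : ℂ)⁻¹ * dPh (dPh u) t r ϑ φ) :=
    smooth_thmulC cd_c2 (smooth_dPh (smooth_dPh hu))
  have d3 : SmoothOnOm rp (fun t r ϑ φ =>
      (σ : ℂ) * (4 * Complex.I * ((Real.cos ϑ / (Real.sin ϑ) ^ 2 : ℝ) : ℂ)) * dPh u t r ϑ φ) :=
    smooth_thmulC (cd_c3 σ) (smooth_dPh hu)
  have d4 : SmoothOnOm rp (fun t r ϑ φ =>
      (4 : ℂ) * (((Real.cos ϑ / Real.sin ϑ) ^ 2 : ℝ) : ℂ) * u t r ϑ φ) :=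
    smooth_thmulC cd_c4 hu
  have d5 : SmoothOnOm rp (fun t r ϑ φ => (4 : ℂ) * u t r ϑ φ) := smooth_cmul 4 hu
  show dR (fun t r ϑ φ =>
      -(Real.sin ϑ : ℂ)⁻¹ * dTh (svv u) t r ϑ φ
      - (((Real.sin ϑ) ^ 2 : ℝ) : ℂ)⁻¹ * dPh (dPh u) t r ϑ φ
      + (σ : ℂ) * (4 * Complex.I * ((Real.cos ϑ / (Real.sin ϑ) ^ 2 : ℝ) : ℂ)) * dPh u t r ϑ φ
      + 4 * (((Real.cos ϑ / Real.sin ϑ) ^ 2 : ℝ) : ℂ) * u t r ϑ φ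
      + 4 * u t r ϑ φ) t r ϑ φ = _
  rw [dR_add (smooth_add (smooth_add (smooth_sub d1 d2) d3) d4) d5 hp,
      dR_add (smooth_add (smooth_sub d1 d2) d3) d4 hp,
      dR_add (smooth_sub d1 d2) d3 hp,
      dR_sub d1 d2 hp]
  have m1 : dR (fun t r ϑ φ => -(Real.sin ϑ : ℂ)⁻¹ * dTh (svv u) t r ϑ φ) t r ϑ φ
      = -(Real.sin ϑ : ℂ)⁻¹ * dR (dTh (svv u)) t r ϑ φ := deriv_const_mul_field _
  have m2 : dR (fun t r ϑ φ => (((Real.sin ϑ) ^ 2 : ℝ) : ℂ)⁻¹ * dPh (dPh u) t r ϑ φ) t r ϑ φ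
      = (((Real.sin ϑ) ^ 2 : ℝ) : ℂ)⁻¹ * dR (dPh (dPh u)) t r ϑ φ := deriv_const_mul_field _
  have m3 : dR (fun t r ϑ φ =>
        (σ : ℂ) * (4 * Complex.I * ((Real.cos ϑ / (Real.sin ϑ) ^ 2 : ℝ) : ℂ)) * dPh u t r ϑ φ)
        t r ϑ φ
      = (σ : ℂ) * (4 * Complex.I * ((Real.cos ϑ / (Real.sin ϑ) ^ 2 : ℝ) : ℂ))
          * dR (dPh u) t r ϑ φ := deriv_const_mul_field _
  have m4 : dR (fun t r ϑ φ => (4 : ℂ) * (((Real.cos ϑ / Real.sin ϑ) ^ 2 : ℝ) : ℂ) * u t r ϑ φ)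
        t r ϑ φ
      = (4 : ℂ) * (((Real.cos ϑ / Real.sin ϑ) ^ 2 : ℝ) : ℂ) * dR u t r ϑ φ :=
    deriv_const_mul_field _
  have m5 : dR (fun t r ϑ φ => (4 : ℂ) * u t r ϑ φ) t r ϑ φ = (4 : ℂ) * dR u t r ϑ φ :=
    deriv_const_mul_field _
  rw [m1, m2, m3, m4, m5, hY1, hY2, hY3]
  unfold angG
  ring

/-- `opG` commutes with the angular operator on smooth functions. -/
lemma opG_angG {M k a : ℝ} (hrp : 0 < rp) (hu : SmoothOnOm rp u)
    (hp : ((t, r, ϑ, φ) : E4) ∈ OmSet rp) :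
    opG M k a (angG σ u) t r ϑ φ = angG σ (opG M k a u) t r ϑ φ := by
  unfold opG
  rw [dT_angG hu hp, dR_angG hu hp,
    angG_add (σ := σ) (smooth_dT hu) (smooth_rmulC (cd_V hrp a) (smooth_dR hu)) hp,
    angG_rmul (σ := σ) (fun x => ((a * (Del M k x / x ^ 2) : ℝ) : ℂ)) (dR u)]

end Angular
section MainPrep

variable {M k rp : ℝ} {u v : F4} {t r ϑ φ : ℝ}

lemma smooth_neg (hu : SmoothOnOm rp u) :
    SmoothOnOm rp (fun t r ϑ φ => -u t r ϑ φ) := hu.neg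

lemma opG_neg {a : ℝ} (u : F4) :
    opG M k a (fun t r ϑ φ => -u t r ϑ φ) t r ϑ φ = -opG M k a u t r ϑ φ := by
  unfold opG
  have h1 : dT (fun t r ϑ φ => -u t r ϑ φ) t r ϑ φ = -dT u t r ϑ φ := deriv.neg
  have h2 : dR (fun t r ϑ φ => -u t r ϑ φ) t r ϑ φ = -dR u t r ϑ φ := deriv.neg
  rw [h1, h2]; ring

lemma hasDerivAt_V' (hr0 : r ≠ 0) (b : ℝ) :
    HasDerivAt (fun x => b * (Del M k x / x ^ 2))
      (b * (((2 * r + k ^ 2 * (4 * r ^ 3) - 2 * M) * r ^ 2 - Del M k r * (2 * r))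
        / (r ^ 2) ^ 2)) r := by
  have h := (hasDerivAt_Del (M := M) (k := k)).div (hasDerivAt_pow 2 r) (pow_ne_zero 2 hr0)
  have h2 := h.const_mul b
  refine h2.congr_deriv ?_
  norm_num

/-- `L` and `L̲` (and generally two `opG`'s) commute on smooth functions. -/
lemma opG_comm (hrp : 0 < rp) (a b : ℝ) (hu : SmoothOnOm rp u)
    (hp : ((t, r, ϑ, φ) : E4) ∈ OmSet rp) :
    opG M k a (opG M k b u) t r ϑ φ = opG M k b (opG M k a u) t r ϑ φ := by
  have hr0 : r ≠ 0 := (hrp.trans hp.1).ne'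
  have expand : ∀ c d : ℝ,
      opG M k c (opG M k d u) t r ϑ φ
        = dT (dT u) t r ϑ φ
          + ((d * (Del M k r / r ^ 2) : ℝ) : ℂ) * dT (dR u) t r ϑ φ
          + ((c * (Del M k r / r ^ 2) : ℝ) : ℂ) * (dR (dT u) t r ϑ φ
            + (((d * (((2 * r + k ^ 2 * (4 * r ^ 3) - 2 * M) * r ^ 2
                - Del M k r * (2 * r)) / (r ^ 2) ^ 2)) : ℝ) : ℂ) * dR u t r ϑ φ
            + ((d * (Del M k r / r ^ 2) : ℝ) : ℂ) * dR (dR u) t r ϑ φ) := by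
    intro c d
    show dT (opG M k d u) t r ϑ φ
        + ((c * (Del M k r / r ^ 2) : ℝ) : ℂ) * dR (opG M k d u) t r ϑ φ = _
    have hT1 : dT (opG M k d u) t r ϑ φ
        = dT (dT u) t r ϑ φ + ((d * (Del M k r / r ^ 2) : ℝ) : ℂ) * dT (dR u) t r ϑ φ := by
      have hadd : dT (fun t r ϑ φ => dT u t r ϑ φ
          + ((d * (Del M k r / r ^ 2) : ℝ) : ℂ) * dR u t r ϑ φ) t r ϑ φ
          = dT (dT u) t r ϑ φ
            + dT (fun t r ϑ φ => ((d * (Del M k r / r ^ 2) : ℝ) : ℂ) * dR u t r ϑ φ) t r ϑ φ :=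
        dT_add (smooth_dT hu) (smooth_rmulC (cd_V hrp d) (smooth_dR hu)) hp
      have hmul : dT (fun t r ϑ φ => ((d * (Del M k r / r ^ 2) : ℝ) : ℂ) * dR u t r ϑ φ)
          t r ϑ φ = ((d * (Del M k r / r ^ 2) : ℝ) : ℂ) * dT (dR u) t r ϑ φ :=
        deriv_const_mul_field _
      exact hadd.trans (by rw [hmul])
    have hR1 : dR (opG M k d u) t r ϑ φ
        = dR (dT u) t r ϑ φ
          + ((d * (((2 * r + k ^ 2 * (4 * r ^ 3) - 2 * M) * r ^ 2
              - Del M k r * (2 * r)) / (r ^ 2) ^ 2) : ℝ) : ℂ) * dR u t r ϑ φ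
          + ((d * (Del M k r / r ^ 2) : ℝ) : ℂ) * dR (dR u) t r ϑ φ := by
      have hadd : dR (fun t r ϑ φ => dT u t r ϑ φ
          + ((d * (Del M k r / r ^ 2) : ℝ) : ℂ) * dR u t r ϑ φ) t r ϑ φ
          = dR (dT u) t r ϑ φ
            + dR (fun t r ϑ φ => ((d * (Del M k r / r ^ 2) : ℝ) : ℂ) * dR u t r ϑ φ) t r ϑ φ :=
        dR_add (smooth_dT hu) (smooth_rmulC (cd_V hrp d) (smooth_dR hu)) hp
      have hmul : dR (fun t r ϑ φ => ((d * (Del M k r / r ^ 2) : ℝ) : ℂ) * dR u t r ϑ φ)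
          t r ϑ φ
          = ((d * (((2 * r + k ^ 2 * (4 * r ^ 3) - 2 * M) * r ^ 2
              - Del M k r * (2 * r)) / (r ^ 2) ^ 2) : ℝ) : ℂ) * dR u t r ϑ φ
            + ((d * (Del M k r / r ^ 2) : ℝ) : ℂ) * dR (dR u) t r ϑ φ :=
        ((hasDerivAt_ofReal' (hasDerivAt_V' hr0 d)).mul (hdR (smooth_dR hu) hp)).deriv
      exact hadd.trans (by rw [hmul]; ring)
    rw [hT1, hR1]
  rw [expand a b, expand b a, clairaut_TR hu hp]
  push_cast
  ring

lemma winv_eq (u : F4) : winv M k u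
    = fun t r ϑ φ => ((((ww M k r)⁻¹ : ℝ)) : ℂ) * u t r ϑ φ := by
  funext t r ϑ φ
  simp [winv, Complex.ofReal_inv]

lemma smooth_winv (hk : 0 < k) (hrp : 0 < rp)
    (hroot : rp + k ^ 2 * rp ^ 3 - 2 * M = 0) (hu : SmoothOnOm rp u) :
    SmoothOnOm rp (winv M k u) := by
  rw [winv_eq]
  exact smooth_rmulC (cd_wwInv hk hrp hroot) hu

lemma cd_Qreal (hrp : 0 < rp) (e : ℝ) :
    ContDiffOn ℝ (⊤ : ℕ∞) (fun x : ℝ => ((e * ((6 * M - 2 * x) / x ^ 2) : ℝ) : ℂ)) (Ioi rp) := by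
  apply cd_ofReal
  exact contDiffOn_const.mul
    ((contDiff_const.sub (contDiff_const.mul contDiff_id)).contDiffOn.div
      (contDiff_id.pow 2).contDiffOn (fun x hx => pow_ne_zero 2 (ne_zero_on_Ioi hrp hx)))

lemma cd_mf' (hrp : 0 < rp) :
    ContDiffOn ℝ (⊤ : ℕ∞) (fun x : ℝ => ((6 * M / x : ℝ) : ℂ)) (Ioi rp) := cd_mf hrp

lemma wwP_eq : wwP M k r = ww M k r * ((6 * M - 2 * r) / r ^ 2) := by
  unfold wwP; ring

lemma Del_eq_ww (hr0 : r ≠ 0) : Del M k r = ww M k r * r ^ 4 := by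
  unfold ww; field_simp

end MainPrep
section MainGeneric

set_option maxHeartbeats 1000000 in
theorem mainG (M k rp : ℝ) (hk : 0 < k) (hrp : 0 < rp)
    (hroot : rp + k ^ 2 * rp ^ 3 - 2 * M = 0) (ε σ : ℝ) (hε : ε = 1 ∨ ε = -1)
    (α F : F4) (hα : SmoothOnOm rp α)
    (hT : ∀ t r ϑ φ : ℝ, ((t, r, ϑ, φ) : E4) ∈ OmSet rp →
      - opG M k ε (opG M k (-ε) α) t r ϑ φ
        + (ε : ℂ) * (2 * ((wwP M k r / ww M k r : ℝ) : ℂ) * opG M k (-ε) α t r ϑ φ)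
        - ((ww M k r : ℝ) : ℂ) * (angG σ α t r ϑ φ - 2 * α t r ϑ φ
            + ((6 * M / r : ℝ) : ℂ) * α t r ϑ φ)
      = F t r ϑ φ) :
    ∀ t r ϑ φ : ℝ, ((t, r, ϑ, φ) : E4) ∈ OmSet rp →
      - opG M k ε (opG M k (-ε) (winv M k (opG M k (-ε) α))) t r ϑ φ
        - ((ww M k r : ℝ) : ℂ) * (angG σ (winv M k (opG M k (-ε) α)) t r ϑ φ
            - ((6 * M / r : ℝ) : ℂ) * winv M k (opG M k (-ε) α) t r ϑ φ)
      = opG M k (-ε) (winv M k F) t r ϑ φ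
        - (ε : ℂ) * (((wwP M k r : ℝ) : ℂ)
            * winv M k (opG M k (-ε) (winv M k (opG M k (-ε) α))) t r ϑ φ)
        + (ε : ℂ) * (6 * (M : ℂ) * ((ww M k r : ℝ) : ℂ) * α t r ϑ φ) := by
  have hQeq : ∀ r : ℝ, rp < r → wwP M k r / ww M k r = (6 * M - 2 * r) / r ^ 2 := by
    intro r hr
    have hw : ww M k r ≠ 0 := (ww_pos hk hrp hroot hr).ne'
    rw [wwP_eq]
    exact mul_div_cancel_left₀ _ hw
  set ψ : F4 := winv M k (opG M k (-ε) α) with hψdef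
  have hψs : SmoothOnOm rp ψ := smooth_winv hk hrp hroot (smooth_opG hrp _ hα)
  have hψfun : ψ = fun t r ϑ φ =>
      (((ww M k r)⁻¹ : ℝ) : ℂ) * opG M k (-ε) α t r ϑ φ := winv_eq _
  have hΨfun : winv M k (opG M k (-ε) ψ) = fun t r ϑ φ =>
      (((ww M k r)⁻¹ : ℝ) : ℂ) * opG M k (-ε) ψ t r ϑ φ := winv_eq _
  have hwψ : ∀ t r ϑ φ : ℝ, ((t, r, ϑ, φ) : E4) ∈ OmSet rp →
      ((ww M k r : ℝ) : ℂ) * ψ t r ϑ φ = opG M k (-ε) α t r ϑ φ := by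
    intro t r ϑ φ hq
    have hw : ww M k r ≠ 0 := (ww_pos hk hrp hroot hq.1).ne'
    have hwC : ((ww M k r : ℝ) : ℂ) ≠ 0 := Complex.ofReal_ne_zero.2 hw
    simp only [hψfun]
    push_cast
    field_simp
  have hwΨ : ∀ t r ϑ φ : ℝ, ((t, r, ϑ, φ) : E4) ∈ OmSet rp →
      ((ww M k r : ℝ) : ℂ) * winv M k (opG M k (-ε) ψ) t r ϑ φ
        = opG M k (-ε) ψ t r ϑ φ := by
    intro t r ϑ φ hq
    have hw : ww M k r ≠ 0 := (ww_pos hk hrp hroot hq.1).ne'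
    have hwC : ((ww M k r : ℝ) : ℂ) ≠ 0 := Complex.ofReal_ne_zero.2 hw
    simp only [hΨfun]
    push_cast
    field_simp
  have hG : ∀ t r ϑ φ : ℝ, ((t, r, ϑ, φ) : E4) ∈ OmSet rp →
      winv M k F t r ϑ φ
        = - opG M k ε ψ t r ϑ φ
          + ((ε * ((6 * M - 2 * r) / r ^ 2) : ℝ) : ℂ) * ψ t r ϑ φ
          - (angG σ α t r ϑ φ - 2 * α t r ϑ φ)
          - ((6 * M / r : ℝ) : ℂ) * α t r ϑ φ := by
    intro t r ϑ φ hq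
    have hr0 : r ≠ 0 := (hrp.trans hq.1).ne'
    have hw : ww M k r ≠ 0 := (ww_pos hk hrp hroot hq.1).ne'
    have hwC : ((ww M k r : ℝ) : ℂ) ≠ 0 := Complex.ofReal_ne_zero.2 hw
    have hrC : ((r : ℝ) : ℂ) ≠ 0 := Complex.ofReal_ne_zero.2 hr0
    have hLψ : opG M k ε ψ t r ϑ φ
        = (((ww M k r)⁻¹ : ℝ) : ℂ) * opG M k ε (opG M k (-ε) α) t r ϑ φ
          + ((ε * (Del M k r / r ^ 2)
              * (-((6 * M - 2 * r) / r ^ 4) / (ww M k r) ^ 2) : ℝ) : ℂ)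
            * opG M k (-ε) α t r ϑ φ := by
      rw [hψfun]
      exact opG_rmul (hasDerivAt_wwInv hw hr0) (smooth_opG hrp _ hα) hq
    have hTq := hT t r ϑ φ hq
    rw [hQeq r hq.1] at hTq
    have hwinv : winv M k F t r ϑ φ = (((ww M k r)⁻¹ : ℝ) : ℂ) * F t r ϑ φ := by
      rw [winv_eq]
    rw [hwinv, ← hTq, hLψ]
    simp only [hψfun]
    rw [Del_eq_ww hr0]
    push_cast
    field_simp
    ring_nf
  intro t r ϑ φ hp
  have hr0 : r ≠ 0 := (hrp.trans hp.1).ne'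
  have hw : ww M k r ≠ 0 := (ww_pos hk hrp hroot hp.1).ne'
  have hwC : ((ww M k r : ℝ) : ℂ) ≠ 0 := Complex.ofReal_ne_zero.2 hw
  have hrC : ((r : ℝ) : ℂ) ≠ 0 := Complex.ofReal_ne_zero.2 hr0
  have hϑIoo : ϑ ∈ Ioo 0 Real.pi := ⟨hp.2.1, hp.2.2⟩
  have sA : SmoothOnOm rp (fun t r ϑ φ => -opG M k ε ψ t r ϑ φ) :=
    smooth_neg (smooth_opG hrp ε hψs)
  have sB : SmoothOnOm rp
      (fun t r ϑ φ => ((ε * ((6 * M - 2 * r) / r ^ 2) : ℝ) : ℂ) * ψ t r ϑ φ) :=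
    smooth_rmulC (cd_Qreal hrp ε) hψs
  have sC : SmoothOnOm rp (fun t r ϑ φ => angG σ α t r ϑ φ - 2 * α t r ϑ φ) :=
    smooth_sub (smooth_angG hα) (smooth_cmul 2 hα)
  have sD : SmoothOnOm rp (fun t r ϑ φ => ((6 * M / r : ℝ) : ℂ) * α t r ϑ φ) :=
    smooth_rmulC (cd_mf hrp) hα
  have h1 : opG M k (-ε) (winv M k F) t r ϑ φ
      = opG M k (-ε) (fun t r ϑ φ =>
          - opG M k ε ψ t r ϑ φ
          + ((ε * ((6 * M - 2 * r) / r ^ 2) : ℝ) : ℂ) * ψ t r ϑ φ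
          - (angG σ α t r ϑ φ - 2 * α t r ϑ φ)
          - ((6 * M / r : ℝ) : ℂ) * α t r ϑ φ) t r ϑ φ :=
    opG_congr hG hp
  have h2 : opG M k (-ε) (fun t r ϑ φ =>
          - opG M k ε ψ t r ϑ φ
          + ((ε * ((6 * M - 2 * r) / r ^ 2) : ℝ) : ℂ) * ψ t r ϑ φ
          - (angG σ α t r ϑ φ - 2 * α t r ϑ φ)
          - ((6 * M / r : ℝ) : ℂ) * α t r ϑ φ) t r ϑ φ
      = opG M k (-ε) (fun t r ϑ φ =>
          - opG M k ε ψ t r ϑ φ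
          + ((ε * ((6 * M - 2 * r) / r ^ 2) : ℝ) : ℂ) * ψ t r ϑ φ
          - (angG σ α t r ϑ φ - 2 * α t r ϑ φ)) t r ϑ φ
        - opG M k (-ε) (fun t r ϑ φ => ((6 * M / r : ℝ) : ℂ) * α t r ϑ φ) t r ϑ φ :=
    opG_sub (smooth_sub (smooth_add sA sB) sC) sD hp
  have h3 : opG M k (-ε) (fun t r ϑ φ =>
          - opG M k ε ψ t r ϑ φ
          + ((ε * ((6 * M - 2 * r) / r ^ 2) : ℝ) : ℂ) * ψ t r ϑ φ
          - (angG σ α t r ϑ φ - 2 * α t r ϑ φ)) t r ϑ φ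
      = opG M k (-ε) (fun t r ϑ φ =>
          - opG M k ε ψ t r ϑ φ
          + ((ε * ((6 * M - 2 * r) / r ^ 2) : ℝ) : ℂ) * ψ t r ϑ φ) t r ϑ φ
        - opG M k (-ε) (fun t r ϑ φ => angG σ α t r ϑ φ - 2 * α t r ϑ φ) t r ϑ φ :=
    opG_sub (smooth_add sA sB) sC hp
  have h4 : opG M k (-ε) (fun t r ϑ φ =>
          - opG M k ε ψ t r ϑ φ
          + ((ε * ((6 * M - 2 * r) / r ^ 2) : ℝ) : ℂ) * ψ t r ϑ φ) t r ϑ φ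
      = opG M k (-ε) (fun t r ϑ φ => - opG M k ε ψ t r ϑ φ) t r ϑ φ
        + opG M k (-ε) (fun t r ϑ φ =>
            ((ε * ((6 * M - 2 * r) / r ^ 2) : ℝ) : ℂ) * ψ t r ϑ φ) t r ϑ φ :=
    opG_add sA sB hp
  have h5 : opG M k (-ε) (fun t r ϑ φ => - opG M k ε ψ t r ϑ φ) t r ϑ φ
      = - opG M k (-ε) (opG M k ε ψ) t r ϑ φ := opG_neg _
  have h6 : opG M k (-ε) (opG M k ε ψ) t r ϑ φ
      = opG M k ε (opG M k (-ε) ψ) t r ϑ φ := opG_comm hrp _ _ hψs hp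
  have h7 : opG M k (-ε) (fun t r ϑ φ =>
        ((ε * ((6 * M - 2 * r) / r ^ 2) : ℝ) : ℂ) * ψ t r ϑ φ) t r ϑ φ
      = ((ε * ((6 * M - 2 * r) / r ^ 2) : ℝ) : ℂ) * opG M k (-ε) ψ t r ϑ φ
        + ((-ε * (Del M k r / r ^ 2) * (ε * ((2 * r - 12 * M) / r ^ 3)) : ℝ) : ℂ)
          * ψ t r ϑ φ :=
    opG_rmul ((hasDerivAt_Q hr0).const_mul ε) hψs hp
  have h8 : opG M k (-ε) (fun t r ϑ φ => angG σ α t r ϑ φ - 2 * α t r ϑ φ) t r ϑ φ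
      = opG M k (-ε) (angG σ α) t r ϑ φ
        - opG M k (-ε) (fun t r ϑ φ => 2 * α t r ϑ φ) t r ϑ φ :=
    opG_sub (smooth_angG hα) (smooth_cmul 2 hα) hp
  have h9 : opG M k (-ε) (angG σ α) t r ϑ φ = angG σ (opG M k (-ε) α) t r ϑ φ :=
    opG_angG hrp hα hp
  have h10 : angG σ (opG M k (-ε) α) t r ϑ φ
      = angG σ (fun t r ϑ φ => ((ww M k r : ℝ) : ℂ) * ψ t r ϑ φ) t r ϑ φ :=
    angG_congr hϑIoo (fun x y hx => (hwψ t r x y ⟨hp.1, hx.1, hx.2⟩).symm)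
  have h11 : angG σ (fun t r ϑ φ => ((ww M k r : ℝ) : ℂ) * ψ t r ϑ φ) t r ϑ φ
      = ((ww M k r : ℝ) : ℂ) * angG σ ψ t r ϑ φ :=
    angG_rmul (fun x => ((ww M k x : ℝ) : ℂ)) ψ
  have h12 : opG M k (-ε) (fun t r ϑ φ => 2 * α t r ϑ φ) t r ϑ φ
      = 2 * opG M k (-ε) α t r ϑ φ := opG_cmul 2 α
  have h13 : opG M k (-ε) (fun t r ϑ φ => ((6 * M / r : ℝ) : ℂ) * α t r ϑ φ) t r ϑ φ
      = ((6 * M / r : ℝ) : ℂ) * opG M k (-ε) α t r ϑ φ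
        + ((-ε * (Del M k r / r ^ 2) * (-(6 * M) / r ^ 2) : ℝ) : ℂ) * α t r ϑ φ :=
    opG_rmul (hasDerivAt_mf hr0) hα hp
  have hA : opG M k (-ε) α t r ϑ φ = ((ww M k r : ℝ) : ℂ) * ψ t r ϑ φ :=
    (hwψ t r ϑ φ hp).symm
  have hB : opG M k (-ε) ψ t r ϑ φ
      = ((ww M k r : ℝ) : ℂ) * winv M k (opG M k (-ε) ψ) t r ϑ φ :=
    (hwΨ t r ϑ φ hp).symm
  rw [h1, h2, h3, h4, h5, h6, h7, h8, h9, h10, h11, h12, h13, hA, hB]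
  rw [Del_eq_ww hr0, wwP_eq]
  rcases hε with rfl | rfl <;>
    (push_cast; field_simp; ring_nf)

end MainGeneric

set_option maxHeartbeats 1000000

/-- If `𝔗⁽±²⁾α̃⁽±²⁾ = F⁽±²⁾` then the intermediate Chandrasekhar
quantities `ψ⁽±²⁾` satisfy the inhomogeneous Regge–Wheeler equations
`𝕽⁽⁺²⁾ψ⁽⁺²⁾ = L̲(w⁻¹F⁽⁺²⁾) − w′Ψ⁽⁺²⁾ + 6Mwα̃⁽⁺²⁾` and
`𝕽⁽⁻²⁾ψ⁽⁻²⁾ = L(w⁻¹F⁽⁻²⁾) + w′Ψ⁽⁻²⁾ − 6Mwα̃⁽⁻²⁾` on `Ω`. -/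
theorem statement2
    (M k rp : ℝ) (hM : 0 < M) (hk : 0 < k) (hrp : 0 < rp)
    (hroot : rp + k ^ 2 * rp ^ 3 - 2 * M = 0)
    (αp αm Fp Fm : F4)
    (hαp : SmoothOnOm rp αp) (hαm : SmoothOnOm rp αm)
    (hFp : SmoothOnOm rp Fp) (hFm : SmoothOnOm rp Fm)
    (hTp : ∀ t r ϑ φ : ℝ, (t, r, ϑ, φ) ∈ OmSet rp → Tp M k αp t r ϑ φ = Fp t r ϑ φ)
    (hTm : ∀ t r ϑ φ : ℝ, (t, r, ϑ, φ) ∈ OmSet rp → Tm M k αm t r ϑ φ = Fm t r ϑ φ)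
    (ψp Ψp ψm Ψm : F4)
    (hψp : ψp = winv M k (opLb M k αp))
    (hΨp : Ψp = winv M k (opLb M k ψp))
    (hψm : ψm = winv M k (opL M k αm))
    (hΨm : Ψm = winv M k (opL M k ψm)) :
    ∀ t r ϑ φ : ℝ, (t, r, ϑ, φ) ∈ OmSet rp →
      RWp M k ψp t r ϑ φ =
        opLb M k (winv M k Fp) t r ϑ φ - ((wwP M k r : ℝ) : ℂ) * Ψp t r ϑ φ
          + 6 * (M : ℂ) * ((ww M k r : ℝ) : ℂ) * αp t r ϑ φ
      ∧
      RWm M k ψm t r ϑ φ =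
        opL M k (winv M k Fm) t r ϑ φ + ((wwP M k r : ℝ) : ℂ) * Ψm t r ϑ φ
          - 6 * (M : ℂ) * ((ww M k r : ℝ) : ℂ) * αm t r ϑ φ := by
  subst hψp hΨp hψm hΨm
  intro t r ϑ φ hp
  constructor
  · -- plus case: ε = 1, σ = -1
    have main := mainG M k rp hk hrp hroot 1 (-1) (Or.inl rfl) αp Fp hαp
      (by
        intro t r ϑ φ hq
        rw [opG_one, opG_negone, angG_eq_angP]
        rw [← hTp t r ϑ φ hq]
        unfold Tp
        push_cast
        ring) t r ϑ φ hp
    simp only [opG_negone, opG_one, angG_eq_angP] at main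
    refine main.trans ?_
    push_cast
    ring
  · -- minus case: ε = -1, σ = 1
    have hcomm : ∀ (u : F4), SmoothOnOm rp u → ∀ t r ϑ φ : ℝ,
        ((t, r, ϑ, φ) : E4) ∈ OmSet rp →
        opLb M k (opL M k u) t r ϑ φ = opL M k (opLb M k u) t r ϑ φ := by
      intro u hu t r ϑ φ hq
      have h := opG_comm (M := M) (k := k) hrp (-1) 1 hu hq
      simp only [opG_one, opG_negone] at h
      exact h
    have main := mainG M k rp hk hrp hroot (-1) 1 (Or.inr rfl) αm Fm hαm
      (by
        intro t r ϑ φ hq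
        simp only [neg_neg]
        rw [opG_one, opG_negone, angG_eq_angM]
        rw [← hTm t r ϑ φ hq]
        unfold Tm
        rw [hcomm αm hαm t r ϑ φ hq]
        push_cast
        ring) t r ϑ φ hp
    simp only [neg_neg] at main
    simp only [opG_one, opG_negone, angG_eq_angM] at main
    have hψms : SmoothOnOm rp (winv M k (opL M k αm)) := by
      apply smooth_winv hk hrp hroot
      rw [← opG_one]
      exact smooth_opG hrp 1 hαm
    rw [hcomm _ hψms t r ϑ φ hp] at main
    refine main.trans ?_
    push_cast
    ring

end Grav
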